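/- Let n ≥ 1 and consider ℝ^n with the L∞ metric. Let V, W ⊆ ℝ^n, let δ, γ > 0, let v₀ ∈ V, w₀ ∈ W, and let f : V → W be surjective with f(v₀) = w₀. For each coordinate i (1 ≤ i ≤ n), write the i-th coordinate of a point u ∈ V as u_i = (v₀)_i + q(u_i)·δ + r(u_i) with q(u_i) = ⌊(u_i − (v₀)_i)/δ⌋ and r(u_i) ∈ [0, δ), and the i-th coordinate of a point w ∈ W as w_i = (w₀)_i + q'(w_i)·γ + r'(w_i) with q'(w_i) = ⌊(w_i − (w₀)_i)/γ⌋ and r'(w_i) ∈ [0, γ). If for all u, v ∈ V and all coordinates i: (1) r(u_i) ≤ r(v_i) if and only if r'(f(u)_i) ≤ r'(f(v)_i), and (2) q(u_i) = q'(f(u)_i), then f is a step-isometry at level (δ, γ) with respect to the L∞ metrics. -/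

import Mathlib

open MeasureTheory Metric

/-- Pairs of distinct points of `V` at distance less than `δ`: potential edges. -/
def LargEdges {S : Type*} [MetricSpace S] (V : Set S) (δ : ℝ) : Set (Sym2 V) :=
  {e | ¬ e.IsDiag ∧ ∀ u v : V, e = s(u, v) → dist (u : S) (v : S) < δ}

/-- The graph on `V` determined by a sample `ω` of the LARG model. -/
def largGraph {S : Type*} [MetricSpace S] (V : Set S) (δ : ℝ)
    (ω : LargEdges V δ → Bool) : SimpleGraph V where
  Adj u v := ∃ h : s(u, v) ∈ LargEdges V δ, ω ⟨s(u, v), h⟩ = true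
  symm := by
    constructor
    intro u v h
    rwa [Sym2.eq_swap]
  loopless := by
    constructor
    rintro u ⟨h, -⟩
    exact h.1 (by simp)

/-- `G` is geometrically existentially closed at level `δ`. -/
def IsGEC {S : Type*} [MetricSpace S] {V : Set S} (G : SimpleGraph V) (δ : ℝ) : Prop :=
  ∀ δ' : ℝ, 0 < δ' → δ' < δ → ∀ x : V, ∀ A B : Finset V,
    Disjoint A B → x ∉ A → x ∉ B →
    (∀ u : V, u ∈ A ∨ u ∈ B → dist (u : S) (x : S) < δ) →
    ∃ z : V, z ∉ A ∧ z ∉ B ∧ z ≠ x ∧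
      (∀ a ∈ A, G.Adj z a) ∧ (∀ b ∈ B, ¬ G.Adj z b) ∧
      (∀ u : V, u ∈ A ∨ u ∈ B → dist (u : S) (z : S) < δ) ∧ dist (x : S) (z : S) < δ'

/-- `G` has threshold `δ`: adjacent vertices are at distance less than `δ`. -/
def HasThreshold {S : Type*} [MetricSpace S] {V : Set S} (G : SimpleGraph V) (δ : ℝ) : Prop :=
  ∀ u v : V, G.Adj u v → dist (u : S) (v : S) < δ

/-- A geometric `δ`-graph: `δ`-g.e.c. with threshold `δ`. -/
def IsGeometricGraph {S : Type*} [MetricSpace S] {V : Set S} (G : SimpleGraph V) (δ : ℝ) : Prop :=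
  IsGEC G δ ∧ HasThreshold G δ

/-- A set is dense in itself. -/
def DenseInItself {S : Type*} [MetricSpace S] (V : Set S) : Prop :=
  ∀ x ∈ V, ∀ ε : ℝ, 0 < ε → ∃ y ∈ V, y ≠ x ∧ dist y x < ε

/-- A graph is existentially closed. -/
def IsEC {α : Type*} (G : SimpleGraph α) : Prop :=
  ∀ A B : Finset α, Disjoint A B →
    ∃ z : α, z ∉ A ∧ z ∉ B ∧ (∀ a ∈ A, G.Adj z a) ∧ (∀ b ∈ B, ¬ G.Adj z b)

/-- A metrically convex set. -/
def MetricConvex {S : Type*} [MetricSpace S] (C : Set S) : Prop :=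
  ∀ x ∈ C, ∀ y ∈ C, ∃ z ∈ C, dist x z + dist z y = dist x y

/-- `f : V → W` is a step-isometry at level `(δ, γ)`. -/
def IsStepIsometry {S T : Type*} [MetricSpace S] [MetricSpace T]
    {V : Set S} {W : Set T} (f : V → W) (δ γ : ℝ) : Prop :=
  Function.Surjective f ∧
    ∀ u v : V, ⌊dist (u : S) (v : S) / δ⌋ = ⌊dist ((f u : T)) ((f v : T)) / γ⌋

/-- Quotient of `v` w.r.t. offset `δ` and anchor `v₀`. -/
noncomputable def quot' (δ v₀ v : ℝ) : ℤ := ⌊(v - v₀) / δ⌋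

/-- Representative of `v` w.r.t. offset `δ` and anchor `v₀`. -/
noncomputable def repr' (δ v₀ v : ℝ) : ℝ := v - v₀ - δ * ⌊(v - v₀) / δ⌋


private lemma repr_nonneg (δ v₀ v : ℝ) (hδ : 0 < δ) : 0 ≤ repr' δ v₀ v := by
  have := Int.sub_floor_div_mul_nonneg (v - v₀) hδ
  unfold repr'; linarith [this]

private lemma repr_lt (δ v₀ v : ℝ) (hδ : 0 < δ) : repr' δ v₀ v < δ := by
  have := Int.sub_floor_div_mul_lt (v - v₀) hδ
  unfold repr'; linarith [this]

private lemma floor_sub_eq (δ v₀ a b : ℝ) (hδ : 0 < δ) :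
    ⌊(a - b) / δ⌋ = quot' δ v₀ a - quot' δ v₀ b +
      (if repr' δ v₀ b ≤ repr' δ v₀ a then 0 else -1) := by
  have hab : a - b = δ * ((quot' δ v₀ a : ℝ) - (quot' δ v₀ b : ℝ)) +
      (repr' δ v₀ a - repr' δ v₀ b) := by
    unfold quot' repr'; push_cast; ring
  rw [hab]
  have hd : (δ * ((quot' δ v₀ a : ℝ) - (quot' δ v₀ b : ℝ)) +
      (repr' δ v₀ a - repr' δ v₀ b)) / δ =
      ((quot' δ v₀ a - quot' δ v₀ b : ℤ) : ℝ) + (repr' δ v₀ a - repr' δ v₀ b) / δ := by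
    push_cast; field_simp
  rw [hd, Int.floor_intCast_add]
  congr 1
  have h0 := repr_nonneg δ v₀ a hδ
  have h1 := repr_lt δ v₀ a hδ
  have h2 := repr_nonneg δ v₀ b hδ
  have h3 := repr_lt δ v₀ b hδ
  by_cases h : repr' δ v₀ b ≤ repr' δ v₀ a
  · simp only [h, if_true]
    rw [Int.floor_eq_iff]
    constructor
    · push_cast; exact div_nonneg (by linarith) hδ.le
    · push_cast; rw [div_lt_iff₀ hδ]; linarith
  · simp only [h, if_false]
    push_neg at h
    rw [Int.floor_eq_iff]
    constructor
    · push_cast; rw [le_div_iff₀ hδ]; linarith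
    · push_cast
      have : (repr' δ v₀ a - repr' δ v₀ b) / δ < 0 := by
        apply div_neg_of_neg_of_pos _ hδ; linarith
      linarith

private lemma floor_abs_div (x δ : ℝ) (hδ : 0 < δ) :
    ⌊|x| / δ⌋ = max ⌊x / δ⌋ ⌊(-x) / δ⌋ := by
  rw [abs_eq_max_neg, ← max_div_div_right hδ.le]
  exact Int.floor_mono.map_max

private lemma floor_dist_pi (n : ℕ) (hn : 1 ≤ n) (x y : Fin n → ℝ) (δ : ℝ) (hδ : 0 < δ) :
    ⌊dist x y / δ⌋ = Finset.univ.sup' (by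
      simp [Finset.univ_nonempty_iff, ← Fin.pos_iff_nonempty]; omega)
      (fun i => ⌊dist (x i) (y i) / δ⌋) := by
  apply le_antisymm
  · have hne : (Finset.univ : Finset (Fin n)).Nonempty := by
      simp [Finset.univ_nonempty_iff, ← Fin.pos_iff_nonempty]; omega
    set k := Finset.univ.sup' hne (fun i => ⌊dist (x i) (y i) / δ⌋) with hk
    have hk0 : 0 ≤ k := by
      obtain ⟨i⟩ := Fin.pos_iff_nonempty.mp (by omega : 0 < n)
      calc (0:ℤ) ≤ ⌊dist (x i) (y i) / δ⌋ := Int.floor_nonneg.mpr (by positivity)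
        _ ≤ k := Finset.le_sup' (fun j => ⌊dist (x j) (y j) / δ⌋) (Finset.mem_univ i)
    have hk1 : (0:ℝ) < ((k+1 : ℤ):ℝ) * δ := by
      have : (0:ℝ) ≤ ((k:ℤ):ℝ) := by exact_mod_cast hk0
      push_cast; nlinarith
    have hlt : dist x y < ((k+1 : ℤ):ℝ) * δ := by
      rw [dist_pi_lt_iff hk1]
      intro i
      have h1 := Int.lt_floor_add_one (dist (x i) (y i) / δ)
      have hki : ⌊dist (x i) (y i) / δ⌋ ≤ k := Finset.le_sup'
        (fun j => ⌊dist (x j) (y j) / δ⌋) (Finset.mem_univ i)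
      have : dist (x i) (y i) / δ < ((k+1 : ℤ):ℝ) := by push_cast at h1 ⊢; exact_mod_cast lt_of_lt_of_le h1 (by exact_mod_cast add_le_add_left hki 1)
      calc dist (x i) (y i) = dist (x i) (y i) / δ * δ := by field_simp
        _ < ((k+1 : ℤ):ℝ) * δ := by apply mul_lt_mul_of_pos_right this hδ
    have : ⌊dist x y / δ⌋ < k + 1 := Int.floor_lt.mpr ((div_lt_iff₀ hδ).mpr hlt)
    omega
  · apply Finset.sup'_le
    intro i _
    apply Int.floor_le_floor
    gcongr
    exact dist_le_pi_dist x y i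

theorem step_isometry_conditions_Rn (n : ℕ) (hn : 1 ≤ n) (V W : Set (Fin n → ℝ))
    (δ γ : ℝ) (hδ : 0 < δ) (hγ : 0 < γ)
    (f : V → W) (hf : Function.Surjective f)
    (v₀ : V) (w₀ : W) (hw₀ : f v₀ = w₀)
    (h1 : ∀ u v : V, ∀ i : Fin n,
      repr' δ ((v₀ : Fin n → ℝ) i) ((u : Fin n → ℝ) i) ≤ repr' δ ((v₀ : Fin n → ℝ) i) ((v : Fin n → ℝ) i) ↔
        repr' γ ((w₀ : Fin n → ℝ) i) ((f u : Fin n → ℝ) i) ≤ repr' γ ((w₀ : Fin n → ℝ) i) ((f v : Fin n → ℝ) i))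
    (h2 : ∀ u : V, ∀ i : Fin n,
      quot' δ ((v₀ : Fin n → ℝ) i) ((u : Fin n → ℝ) i) = quot' γ ((w₀ : Fin n → ℝ) i) ((f u : Fin n → ℝ) i)) :
    ∀ u v : V, ⌊dist (u : Fin n → ℝ) (v : Fin n → ℝ) / δ⌋ =
      ⌊dist ((f u : Fin n → ℝ)) ((f v : Fin n → ℝ)) / γ⌋ := by
  intro u v
  have hne : (Finset.univ : Finset (Fin n)).Nonempty := by
    simp [Finset.univ_nonempty_iff, ← Fin.pos_iff_nonempty]; omega
  rw [floor_dist_pi n hn _ _ δ hδ, floor_dist_pi n hn _ _ γ hγ]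
  apply Finset.sup'_congr _ rfl
  intro i _
  rw [Real.dist_eq, Real.dist_eq, floor_abs_div _ δ hδ, floor_abs_div _ γ hγ,
    neg_sub, neg_sub,
    floor_sub_eq δ ((v₀ : Fin n → ℝ) i) _ _ hδ,
    floor_sub_eq δ ((v₀ : Fin n → ℝ) i) _ _ hδ,
    floor_sub_eq γ ((w₀ : Fin n → ℝ) i) _ _ hγ,
    floor_sub_eq γ ((w₀ : Fin n → ℝ) i) _ _ hγ,
    ← h2 u i, ← h2 v i]
  simp only [h1 u v i, h1 v u i]
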